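/- For real α and k > 0 define Λ(k, α) := 2·k^{4α}·α·(1+α)⁴·(2^{α+1} − 3 − α)/(2^α − 1). Then Λ(k, α) < 0 for all k > 0 whenever 1/2 < α < 1, and Λ(k, α) > 0 for all k > 0 whenever α > 1. -/
import Mathlib

/-- Sign of the small-amplitude modulational instability index
`Λ(k,α) = 2k^{4α}α(1+α)⁴(2^{α+1} − 3 − α)/(2^α − 1)` for the fractional KdV
equation: negative for all `k > 0` when `1/2 < α < 1`, positive for all `k > 0`
when `α > 1`. -/
theorem stmt_17 (Λ : ℝ → ℝ → ℝ)
    (hΛ : ∀ k α : ℝ, Λ k α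
      = 2 * k ^ (4 * α) * α * (1 + α) ^ 4 * ((2 : ℝ) ^ (α + 1) - 3 - α)
          / ((2 : ℝ) ^ α - 1)) :
    (∀ k α : ℝ, 0 < k → 1 / 2 < α → α < 1 → Λ k α < 0) ∧
    (∀ k α : ℝ, 0 < k → 1 < α → 0 < Λ k α) := by
  constructor
  · intro k α hk h1 h2
    rw [hΛ]
    have hα : (0:ℝ) < α := by linarith
    have hber : (2:ℝ) ^ α < 1 + α := by
      have := rpow_one_add_lt_one_add_mul_self (s := 1) (by norm_num) (by norm_num)
        hα h2
      norm_num at this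
      linarith
    have hden : (0:ℝ) < 2 ^ α - 1 := by
      have : (1:ℝ) < 2 ^ α := by
        calc (1:ℝ) = (2:ℝ) ^ (0:ℝ) := by norm_num
        _ < 2 ^ α := Real.rpow_lt_rpow_left_iff (by norm_num) |>.2 hα
      linarith
    have hnum : (2:ℝ) ^ (α + 1) - 3 - α < 0 := by
      have : (2:ℝ) ^ (α + 1) = 2 ^ α * 2 := by
        rw [Real.rpow_add (by norm_num), Real.rpow_one]
      rw [this]; nlinarith
    have hpos : (0:ℝ) < 2 * k ^ (4 * α) * α * (1 + α) ^ 4 := by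
      have := Real.rpow_pos_of_pos hk (4 * α)
      positivity
    exact div_neg_of_neg_of_pos (by nlinarith) hden
  · intro k α hk h1
    rw [hΛ]
    have hα : (0:ℝ) < α := by linarith
    have hber : 1 + α < (2:ℝ) ^ α := by
      have := one_add_mul_self_lt_rpow_one_add (s := 1) (by norm_num) (by norm_num) h1
      norm_num at this
      linarith
    have hden : (0:ℝ) < 2 ^ α - 1 := by linarith
    have hnum : (0:ℝ) < (2:ℝ) ^ (α + 1) - 3 - α := by
      have : (2:ℝ) ^ (α + 1) = 2 ^ α * 2 := by
        rw [Real.rpow_add (by norm_num), Real.rpow_one]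
      rw [this]; nlinarith
    have hpos : (0:ℝ) < 2 * k ^ (4 * α) * α * (1 + α) ^ 4 := by
      have := Real.rpow_pos_of_pos hk (4 * α)
      positivity
    exact div_pos (by nlinarith) hden
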